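/- Let G be a word hyperbolic group with finite generating set A and H ≤ G a subgroup that is quasiconvex as a subset of Γ(G,A). Then H is finitely generated and the inclusion (H, d_B) ⊆ (G, d_A) is a quasi-isometric embedding for any finite generating set B of H. -/

import Mathlib

def evalWord {A G : Type} [Group G] (a : A → G) (w : List A) : G :=
  (w.map a).prod

noncomputable def wlen {A G : Type} [Group G] (a : A → G) (g : G) : ℕ :=
  sInf {n | ∃ w : List A, evalWord a w = g ∧ w.length = n}

noncomputable def wdist {A G : Type} [Group G] (a : A → G) (g h : G) : ℕ :=
  wlen a (g⁻¹ * h)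

noncomputable def wordLength {K : Type} [Group K] (S : Set K) (g : K) : ℕ :=
  sInf {n | ∃ w : List K, (∀ x ∈ w, x ∈ S) ∧ w.prod = g ∧ w.length = n}

def FourPointHyperbolic {A G : Type} [Group G] (a : A → G) (δ : ℝ) : Prop :=
  ∀ x y z w : G, (wdist a x y : ℝ) + wdist a z w ≤
    max ((wdist a x z : ℝ) + wdist a y w) ((wdist a x w : ℝ) + wdist a y z) + 2 * δ

section Aux

variable {A G : Type} [Group G]

lemma evalWord_append (a : A → G) (w₁ w₂ : List A) :
    evalWord a (w₁ ++ w₂) = evalWord a w₁ * evalWord a w₂ := by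
  simp [evalWord]

lemma wlen_le (a : A → G) {w : List A} {g : G} (h : evalWord a w = g) :
    wlen a g ≤ w.length := Nat.sInf_le ⟨w, h, rfl⟩

lemma wlen_spec (a : A → G) (hgen : ∀ g : G, ∃ w : List A, evalWord a w = g) (g : G) :
    ∃ w : List A, evalWord a w = g ∧ w.length = wlen a g := by
  have hne : {n | ∃ w : List A, evalWord a w = g ∧ w.length = n}.Nonempty := by
    obtain ⟨w, hw⟩ := hgen g; exact ⟨w.length, w, hw, rfl⟩
  obtain ⟨w, hw, hl⟩ := Nat.sInf_mem hne
  exact ⟨w, hw, hl⟩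

lemma wlen_one (a : A → G) : wlen a (1 : G) = 0 :=
  Nat.le_zero.mp (wlen_le a (by simp [evalWord] : evalWord a ([] : List A) = 1))

lemma wlen_mul_le (a : A → G) (hgen : ∀ g : G, ∃ w : List A, evalWord a w = g) (g h : G) :
    wlen a (g * h) ≤ wlen a g + wlen a h := by
  obtain ⟨w₁, e₁, l₁⟩ := wlen_spec a hgen g
  obtain ⟨w₂, e₂, l₂⟩ := wlen_spec a hgen h
  calc wlen a (g * h) ≤ (w₁ ++ w₂).length :=
        wlen_le a (by rw [evalWord_append, e₁, e₂])
    _ = wlen a g + wlen a h := by simp [l₁, l₂]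

lemma wlen_inv_le (a : A → G) (hinv : ∀ x : A, ∃ y : A, a y = (a x)⁻¹)
    (hgen : ∀ g : G, ∃ w : List A, evalWord a w = g) (g : G) :
    wlen a g⁻¹ ≤ wlen a g := by
  obtain ⟨w, e, l⟩ := wlen_spec a hgen g
  choose I hI using hinv
  have he : evalWord a ((w.map I).reverse) = g⁻¹ := by
    rw [← e]
    simp only [evalWord, List.map_reverse, List.map_map]
    rw [List.prod_inv_reverse, List.map_map]
    congr 2
    exact List.map_congr_left fun x _ => hI x
  calc wlen a g⁻¹ ≤ ((w.map I).reverse).length := wlen_le a he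
    _ = wlen a g := by simp [l]

lemma wlen_letter_le (a : A → G) (x : A) : wlen a (a x) ≤ 1 :=
  wlen_le a (by simp [evalWord] : evalWord a [x] = a x)

lemma wlen_eq_zero (a : A → G) (hgen : ∀ g : G, ∃ w : List A, evalWord a w = g) {g : G}
    (h : wlen a g = 0) : g = 1 := by
  obtain ⟨w, e, l⟩ := wlen_spec a hgen g
  rw [h, List.length_eq_zero_iff] at l
  subst l
  simp [evalWord] at e
  exact e.symm

lemma prod_telescope (c : ℕ → G) (n : ℕ) :
    ((List.range n).map fun k => (c k)⁻¹ * c (k + 1)).prod = (c 0)⁻¹ * c n := by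
  induction n with
  | zero => simp
  | succ m ih =>
      rw [List.range_succ, List.map_append, List.prod_append, ih]
      simp [mul_assoc]

/-- Ball of radius N in word metric is finite (finite alphabet). -/
lemma ball_finite (a : A → G) [Fintype A]
    (hgen : ∀ g : G, ∃ w : List A, evalWord a w = g) (N : ℕ) :
    {g : G | wlen a g ≤ N}.Finite := by
  have h1 : {w : List A | w.length ≤ N}.Finite := List.finite_length_le A N
  apply Set.Finite.subset (h1.image (evalWord a))
  intro g hg
  simp only [Set.mem_setOf_eq] at hg
  obtain ⟨w, hw, hl⟩ := wlen_spec a hgen g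
  exact ⟨w, by simp only [Set.mem_setOf_eq]; rw [hl]; exact hg, hw⟩

/-- Every element expressible in a symmetric generating set. -/
lemma expressible {K : Type} [Group K] (B : Set K) (hsym : ∀ x ∈ B, x⁻¹ ∈ B)
    {g : K} (hg : g ∈ Subgroup.closure B) :
    ∃ w : List K, (∀ x ∈ w, x ∈ B) ∧ w.prod = g := by
  induction hg using Subgroup.closure_induction with
  | mem x hx => exact ⟨[x], by simpa using hx, by simp⟩
  | one => exact ⟨[], by simp, by simp⟩
  | mul x y _ _ ihx ihy =>
      obtain ⟨w₁, h₁, e₁⟩ := ihx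
      obtain ⟨w₂, h₂, e₂⟩ := ihy
      refine ⟨w₁ ++ w₂, ?_, by simp [e₁, e₂]⟩
      intro z hz
      rcases List.mem_append.mp hz with h | h
      exacts [h₁ z h, h₂ z h]
  | inv x _ ihx =>
      obtain ⟨w, h₁, e₁⟩ := ihx
      refine ⟨(w.map fun z => z⁻¹).reverse, ?_, by rw [← List.prod_inv_reverse, e₁]⟩
      intro z hz
      simp only [List.mem_reverse, List.mem_map] at hz
      obtain ⟨y, hy, rfl⟩ := hz
      exact hsym y (h₁ y hy)

lemma wordLength_le {K : Type} [Group K] (B : Set K) {w : List K} {g : K}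
    (hw : ∀ x ∈ w, x ∈ B) (he : w.prod = g) : wordLength B g ≤ w.length :=
  Nat.sInf_le ⟨w, hw, he, rfl⟩

lemma wordLength_spec {K : Type} [Group K] (B : Set K) {g : K}
    (hex : ∃ w : List K, (∀ x ∈ w, x ∈ B) ∧ w.prod = g) :
    ∃ w : List K, (∀ x ∈ w, x ∈ B) ∧ w.prod = g ∧ w.length = wordLength B g := by
  have hne : {n | ∃ w : List K, (∀ x ∈ w, x ∈ B) ∧ w.prod = g ∧ w.length = n}.Nonempty := by
    obtain ⟨w, h1, h2⟩ := hex; exact ⟨w.length, w, h1, h2, rfl⟩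
  exact Nat.sInf_mem hne

end Aux

section Main

variable {A G : Type} [Group G]

/-- Key decomposition: any element of a quasiconvex subgroup is a product of
`wlen h` many elements of `H`, each of word length at most `2ε+1`. -/
lemma main_decomp (a : A → G)
    (hgen : ∀ g : G, ∃ w : List A, evalWord a w = g)
    (H : Subgroup G) (ε : ℝ) (hε : 0 < ε)
    (hqc : ∀ h : G, h ∈ H → ∀ w : List A, evalWord a w = h →
      w.length = wlen a h → ∀ p : List A, p <+: w →
        ∃ u : List A, (u.length : ℝ) ≤ ε ∧ evalWord a p * evalWord a u ∈ H)
    (hinv : ∀ x : A, ∃ y : A, a y = (a x)⁻¹)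
    {h : G} (hh : h ∈ H) :
    ∃ l : List H, (∀ x ∈ l, (wlen a (x : G) : ℝ) ≤ 2 * ε + 1) ∧
      (l.map (Subtype.val)).prod = h ∧ l.length = wlen a h := by
  obtain ⟨w, hwe, hwl⟩ := wlen_spec a hgen h
  set n := wlen a h with hn
  have key : ∀ k : ℕ, ∃ v : G, evalWord a (w.take k) * v ∈ H ∧
      (wlen a v : ℝ) ≤ ε ∧ (k = 0 → v = 1) ∧ (k = n → v = 1) := by
    intro k
    by_cases h0 : k = 0
    · refine ⟨1, ?_, by simpa [wlen_one a] using hε.le, fun _ => rfl, fun _ => rfl⟩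
      subst h0
      simpa [evalWord] using H.one_mem
    by_cases hkn : k = n
    · refine ⟨1, ?_, by simpa [wlen_one a] using hε.le, fun h => absurd h h0, fun _ => rfl⟩
      subst hkn
      rw [← hwl, List.take_length, hwe]
      simpa using hh
    · obtain ⟨u, hu1, hu2⟩ := hqc h hh w hwe (by rw [hwl]) (w.take k) (List.take_prefix k w)
      refine ⟨evalWord a u, hu2, ?_, fun h => absurd h h0, fun h => absurd h hkn⟩
      calc (wlen a (evalWord a u) : ℝ) ≤ u.length := by
            exact_mod_cast wlen_le a rfl
        _ ≤ ε := hu1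
  choose v hvH hvε hv0 hvn using key
  set c : ℕ → G := fun k => evalWord a (w.take k) * v k with hc
  have hc0 : c 0 = 1 := by simp [hc, evalWord, hv0 0 rfl]
  have hcn : c n = h := by
    have h1 : w.take n = w := by rw [← hwl]; exact List.take_length
    simp only [hc, h1, hwe, hvn n rfl, mul_one]
  have hcH : ∀ k, c k ∈ H := fun k => hvH k
  set f : ℕ → H := fun k => ⟨(c k)⁻¹ * c (k + 1), H.mul_mem (H.inv_mem (hcH k)) (hcH (k + 1))⟩
    with hf
  refine ⟨(List.range n).map f, ?_, ?_, by simp⟩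
  · intro x hx
    simp only [List.mem_map, List.mem_range] at hx
    obtain ⟨k, hk, rfl⟩ := hx
    have hk' : k < w.length := by rw [hwl]; exact hk
    have htake : w.take (k + 1) = w.take k ++ [w[k]] := by
      rw [List.take_succ, List.getElem?_eq_getElem hk']
      rfl
    have hval : ((f k : G)) = (v k)⁻¹ * (a w[k] * v (k + 1)) := by
      simp only [hf, hc, htake, evalWord_append]
      simp [evalWord, mul_assoc]
    have h1 : wlen a ((f k : G)) ≤ wlen a (v k)⁻¹ + (wlen a (a w[k]) + wlen a (v (k + 1))) := by
      rw [hval]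
      exact le_trans (wlen_mul_le a hgen _ _)
        (Nat.add_le_add_left (wlen_mul_le a hgen _ _) _)
    have h2 : wlen a (v k)⁻¹ ≤ wlen a (v k) := wlen_inv_le a hinv hgen _
    have h3 : wlen a (a w[k]) ≤ 1 := wlen_letter_le a _
    have := hvε k
    have := hvε (k + 1)
    have hcast : (wlen a ((f k : G)) : ℝ) ≤
        (wlen a (v k) : ℝ) + (1 + (wlen a (v (k + 1)) : ℝ)) := by
      exact_mod_cast le_trans h1 (add_le_add h2 (add_le_add h3 le_rfl))
    linarith
  · rw [List.map_map]
    have : (Subtype.val ∘ f) = fun k => (c k)⁻¹ * c (k + 1) := rfl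
    rw [this, prod_telescope, hc0, hcn]
    simp

end Main

/-- In a word hyperbolic group, a subgroup that is quasiconvex as a subset of the Cayley
graph is finitely generated and quasi-isometrically embedded for any finite generating set. -/
theorem fg_and_qi_embedded_of_quasiconvex
    {A G : Type} [Fintype A] [Group G] (a : A → G)
    (hinv : ∀ x : A, ∃ y : A, a y = (a x)⁻¹)
    (hgen : ∀ g : G, ∃ w : List A, evalWord a w = g)
    (δ : ℝ) (hδ : 0 ≤ δ) (hhyp : FourPointHyperbolic a δ)
    (H : Subgroup G)
    (hqc : ∃ ε : ℝ, 0 < ε ∧ ∀ h : G, h ∈ H → ∀ w : List A, evalWord a w = h →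
      w.length = wlen a h → ∀ p : List A, p <+: w →
        ∃ u : List A, (u.length : ℝ) ≤ ε ∧ evalWord a p * evalWord a u ∈ H) :
    H.FG ∧ ∀ B : Set H, B.Finite → (∀ x ∈ B, x⁻¹ ∈ B) → Subgroup.closure B = ⊤ →
      ∃ C : ℝ, 0 < C ∧ ∀ h : H, (wordLength B h : ℝ) / C - C ≤ wlen a (h : G) ∧
        (wlen a (h : G) : ℝ) ≤ C * wordLength B h + C := by
  obtain ⟨ε, hε, hqc'⟩ := hqc
  set N : ℕ := ⌈2 * ε + 1⌉₊ with hN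
  have hball : {g : G | wlen a g ≤ N}.Finite := ball_finite a hgen N
  have hdecomp := fun (h : G) (hh : h ∈ H) => main_decomp a hgen H ε hε hqc' hinv hh
  -- short elements bound
  have hshort : ∀ (x : G), (wlen a x : ℝ) ≤ 2 * ε + 1 → wlen a x ≤ N := by
    intro x hx
    have : (wlen a x : ℝ) ≤ (N : ℝ) := hx.trans (Nat.le_ceil _)
    exact_mod_cast this
  constructor
  · -- finitely generated
    rw [Subgroup.fg_iff]
    refine ⟨{g : G | g ∈ H ∧ wlen a g ≤ N}, ?_, hball.subset (fun g hg => hg.2)⟩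
    apply le_antisymm
    · rw [Subgroup.closure_le]
      exact fun g hg => hg.1
    · intro h hh
      obtain ⟨l, hl1, hl2, _⟩ := hdecomp h hh
      rw [← hl2]
      apply Subgroup.list_prod_mem
      intro x hx
      simp only [List.mem_map] at hx
      obtain ⟨y, hy, rfl⟩ := hx
      exact Subgroup.subset_closure ⟨y.2, hshort _ (hl1 y hy)⟩
  · intro B hBfin hBsym hBgen
    -- every element of H expressible in B
    have hexpr : ∀ h : H, ∃ w : List H, (∀ x ∈ w, x ∈ B) ∧ w.prod = h := by
      intro h
      exact expressible B hBsym (by rw [hBgen]; trivial)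
    -- constant M : easy direction
    obtain ⟨M, hMb⟩ : ∃ M : ℕ, ∀ b ∈ B, wlen a (b : G) ≤ M :=
      ⟨hBfin.toFinset.sup (fun b => wlen a (b : G)),
        fun b hb => Finset.le_sup (f := fun b : H => wlen a (b : G)) (hBfin.mem_toFinset.mpr hb)⟩
    -- finite set of short elements of H
    have hSfin : {x : H | wlen a (x : G) ≤ N}.Finite := by
      have : Set.InjOn (Subtype.val : H → G) {x : H | wlen a (x : G) ≤ N} :=
        Subtype.val_injective.injOn
      exact Set.Finite.of_finite_image (hball.subset (by
        intro g hg
        simp only [Set.mem_image] at hg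
        obtain ⟨x, hx, rfl⟩ := hg
        exact hx)) this
    obtain ⟨K, hKb⟩ : ∃ K : ℕ, ∀ s : H, wlen a (s : G) ≤ N → wordLength B s ≤ K :=
      ⟨hSfin.toFinset.sup (fun s => wordLength B (s : H)),
        fun s hs => Finset.le_sup (f := fun s : H => wordLength B s) (hSfin.mem_toFinset.mpr hs)⟩
    refine ⟨(M : ℝ) + K + 1, by positivity, fun h => ?_⟩
    -- wordLength B h ≤ K * wlen a h
    have hupper : wordLength B h ≤ K * wlen a (h : G) := by
      obtain ⟨l, hl1, hl2, hl3⟩ := hdecomp (h : G) h.2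
      have hlh : l.prod = h := by
        apply Subtype.val_injective
        rw [← hl2]
        simp
      -- build word: concatenation of minimal B-words of the factors
      have hword : ∀ ll : List H, (∀ x ∈ ll, wordLength B x ≤ K) →
          ∃ w : List H, (∀ x ∈ w, x ∈ B) ∧ w.prod = ll.prod ∧ w.length ≤ K * ll.length := by
        intro ll hll
        induction ll with
        | nil => exact ⟨[], by simp, by simp, by simp⟩
        | cons x t ih =>
            obtain ⟨w₂, h₂1, h₂2, h₂3⟩ := ih (fun y hy => hll y (List.mem_cons_of_mem x hy))
            obtain ⟨w₁, h₁1, h₁2, h₁3⟩ := wordLength_spec B (hexpr x)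
            refine ⟨w₁ ++ w₂, ?_, by simp [h₁2, h₂2], ?_⟩
            · intro z hz
              rcases List.mem_append.mp hz with hz | hz
              exacts [h₁1 z hz, h₂1 z hz]
            · have : w₁.length ≤ K := h₁3.le.trans (hll x List.mem_cons_self)
              simp only [List.length_append, List.length_cons]
              calc w₁.length + w₂.length ≤ K + K * t.length := by gcongr
                _ = K * (t.length + 1) := by ring
      obtain ⟨w, hw1, hw2, hw3⟩ := hword l (fun x hx => hKb x (hshort _ (hl1 x hx)))
      calc wordLength B h ≤ w.length := wordLength_le B hw1 (by rw [hw2, hlh])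
        _ ≤ K * l.length := hw3
        _ = K * wlen a (h : G) := by rw [hl3]
    -- wlen a h ≤ M * wordLength B h
    have hlower : wlen a (h : G) ≤ M * wordLength B h := by
      obtain ⟨w, hw1, hw2, hw3⟩ := wordLength_spec B (hexpr h)
      have : ∀ ll : List H, (∀ x ∈ ll, x ∈ B) →
          wlen a ((ll.prod : H) : G) ≤ M * ll.length := by
        intro ll hll
        induction ll with
        | nil => simp [wlen_one a]
        | cons x t ih =>
            have hx : wlen a ((x : H) : G) ≤ M := hMb x (hll x List.mem_cons_self)
            have ht := ih (fun y hy => hll y (List.mem_cons_of_mem x hy))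
            calc wlen a ((((x :: t).prod : H)) : G)
                = wlen a ((x : G) * ((t.prod : H) : G)) := by simp
              _ ≤ wlen a ((x : G)) + wlen a ((t.prod : H) : G) := wlen_mul_le a hgen _ _
              _ ≤ M + M * t.length := by gcongr
              _ = M * (x :: t).length := by simp [List.length_cons]; ring
      calc wlen a (h : G) = wlen a ((w.prod : H) : G) := by rw [hw2]
        _ ≤ M * w.length := this w hw1
        _ = M * wordLength B h := by rw [hw3]
    constructor
    · set C : ℝ := (M : ℝ) + K + 1 with hCdef
      have hC : (0 : ℝ) < C := by positivity
      have hw0 : (0 : ℝ) ≤ (wlen a (h : G) : ℝ) := Nat.cast_nonneg _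
      have hM0 : (0 : ℝ) ≤ (M : ℝ) := Nat.cast_nonneg _
      have hu' : (wordLength B h : ℝ) ≤ (K : ℝ) * wlen a (h : G) := by exact_mod_cast hupper
      have h2 : (wordLength B h : ℝ) / C ≤ wlen a (h : G) := by
        rw [div_le_iff₀ hC]
        nlinarith [mul_nonneg (by rw [hCdef]; linarith : (0 : ℝ) ≤ C - K) hw0]
      linarith
    · have hl' : (wlen a (h : G) : ℝ) ≤ (M : ℝ) * wordLength B h := by exact_mod_cast hlower
      have hw0 : (0 : ℝ) ≤ (wordLength B h : ℝ) := Nat.cast_nonneg _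
      have hK0 : (0 : ℝ) ≤ (K : ℝ) := Nat.cast_nonneg _
      nlinarith [mul_nonneg hK0 hw0]
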